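/- Let κ < 0 and fix ξ > 0. Then the function λ ↦ J(λ, ξ) is strictly decreasing on (0, ∞): for all 0 < λ₁ < λ₂ one has J(λ₂, ξ) < J(λ₁, ξ). Moreover, J(λ, ξ) → ∞ as λ → 0⁺. -/

import Mathlib

open Set Real Filter

noncomputable section

/-- `u` is twice continuously differentiable on `[a,b]`, satisfies
`1 + κ (u')² > 0` and the ODE `-u'' = λ u (1 + κ (u')²)^(3/2)` on `[a,b]`. -/
def SolODE (κ lam : ℝ) (u : ℝ → ℝ) (a b : ℝ) : Prop :=
  (∀ x ∈ Set.Icc a b, DifferentiableAt ℝ u x) ∧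
  (∀ x ∈ Set.Icc a b, DifferentiableAt ℝ (deriv u) x) ∧
  ContinuousOn (deriv (deriv u)) (Set.Icc a b) ∧
  (∀ x ∈ Set.Icc a b, 0 < 1 + κ * (deriv u x) ^ 2) ∧
  (∀ x ∈ Set.Icc a b,
    -(deriv (deriv u) x) = lam * u x * (1 + κ * (deriv u x) ^ 2) ^ ((3 : ℝ) / 2))

/-- `u` is a solution of problem (P) on `[0,1]` with Dirichlet boundary conditions. -/
def SolP (κ lam : ℝ) (u : ℝ → ℝ) : Prop :=
  SolODE κ lam u 0 1 ∧ u 0 = 0 ∧ u 1 = 0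

/-- `u` is an `S⁺ₙ`-solution of problem (P): a nontrivial solution with exactly
`n - 1` zeros in `(0,1)`, all zeros in `[0,1]` simple, and positive near `0`. -/
def SPlus (κ lam : ℝ) (n : ℕ) (u : ℝ → ℝ) : Prop :=
  SolP κ lam u ∧
  (∃ x ∈ Set.Icc (0 : ℝ) 1, u x ≠ 0) ∧
  {x ∈ Set.Ioo (0 : ℝ) 1 | u x = 0}.ncard = n - 1 ∧
  (∀ τ ∈ Set.Icc (0 : ℝ) 1, u τ = 0 → deriv u τ ≠ 0) ∧
  (∃ δ > 0, ∀ x ∈ Set.Ioo (0 : ℝ) δ, 0 < u x)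

/-- The constant `B = ∫₀¹ dθ/√(θ⁻⁴ - 1)`. -/
def Bconst : ℝ := ∫ θ in (0 : ℝ)..1, 1 / Real.sqrt ((θ ^ 4)⁻¹ - 1)

/-- The sup-norm of `u` over `[0,1]`. -/
def supNorm (u : ℝ → ℝ) : ℝ := sSup ((fun x => |u x|) '' Set.Icc (0 : ℝ) 1)

/-- The time map `J(λ, ξ) = √(-κ) ∫₀¹ ξ/√(1 - (1 - λκξ²(1-θ²)/2)⁻²) dθ`. -/
def Jmap (κ lam ξ : ℝ) : ℝ :=
  Real.sqrt (-κ) *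
    ∫ θ in (0 : ℝ)..1,
      ξ / Real.sqrt (1 - ((1 - lam * κ / 2 * ξ ^ 2 * (1 - θ ^ 2))⁻¹) ^ 2)

open MeasureTheory intervalIntegral

namespace S18

/-- the integrand -/
def G (ξ b θ : ℝ) : ℝ := ξ / Real.sqrt (1 - ((1 + b * (1 - θ ^ 2))⁻¹) ^ 2)

lemma sq_lt_one {θ : ℝ} (hθ0 : 0 ≤ θ) (hθ1 : θ < 1) : θ ^ 2 < 1 := by nlinarith

lemma one_lt_f {b θ : ℝ} (hb : 0 < b) (hθ0 : 0 ≤ θ) (hθ1 : θ < 1) :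
    1 < 1 + b * (1 - θ ^ 2) := by
  nlinarith [sq_lt_one hθ0 hθ1, mul_pos hb (show (0:ℝ) < 1 - θ ^ 2 by nlinarith [sq_lt_one hθ0 hθ1])]

lemma D_pos {b θ : ℝ} (hb : 0 < b) (hθ0 : 0 ≤ θ) (hθ1 : θ < 1) :
    0 < 1 - ((1 + b * (1 - θ ^ 2))⁻¹) ^ 2 := by
  have hf := one_lt_f hb hθ0 hθ1
  have h1 : (1 + b * (1 - θ ^ 2))⁻¹ < 1 := inv_lt_one_of_one_lt₀ hf
  have h0 : 0 < (1 + b * (1 - θ ^ 2))⁻¹ := inv_pos.2 (by linarith)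
  nlinarith

lemma G_pos {ξ b θ : ℝ} (hξ : 0 < ξ) (hb : 0 < b) (hθ0 : 0 ≤ θ) (hθ1 : θ < 1) :
    0 < G ξ b θ :=
  div_pos hξ (Real.sqrt_pos.2 (D_pos hb hθ0 hθ1))

lemma G_nonneg {ξ b θ : ℝ} (hξ : 0 < ξ) : 0 ≤ G ξ b θ :=
  div_nonneg hξ.le (Real.sqrt_nonneg _)

/-- strict pointwise monotonicity in b -/
lemma G_strict_mono {ξ b₁ b₂ θ : ℝ} (hξ : 0 < ξ) (hb₁ : 0 < b₁) (hb : b₁ < b₂)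
    (hθ0 : 0 ≤ θ) (hθ1 : θ < 1) : G ξ b₂ θ < G ξ b₁ θ := by
  have hθ2 : 0 < 1 - θ ^ 2 := by nlinarith [sq_lt_one hθ0 hθ1]
  have hf1 : 1 < 1 + b₁ * (1 - θ ^ 2) := one_lt_f hb₁ hθ0 hθ1
  have hf2 : 1 + b₁ * (1 - θ ^ 2) < 1 + b₂ * (1 - θ ^ 2) := by nlinarith
  have hD1 := D_pos hb₁ hθ0 hθ1
  have hinv : (1 + b₂ * (1 - θ ^ 2))⁻¹ < (1 + b₁ * (1 - θ ^ 2))⁻¹ :=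
    inv_strictAnti₀ (by linarith) hf2
  have hinv2pos : 0 < (1 + b₂ * (1 - θ ^ 2))⁻¹ := inv_pos.2 (by linarith)
  have hDlt : 1 - ((1 + b₁ * (1 - θ ^ 2))⁻¹) ^ 2 < 1 - ((1 + b₂ * (1 - θ ^ 2))⁻¹) ^ 2 := by
    nlinarith
  have hs1 : 0 < Real.sqrt (1 - ((1 + b₁ * (1 - θ ^ 2))⁻¹) ^ 2) := Real.sqrt_pos.2 hD1
  have hs : Real.sqrt (1 - ((1 + b₁ * (1 - θ ^ 2))⁻¹) ^ 2)
      < Real.sqrt (1 - ((1 + b₂ * (1 - θ ^ 2))⁻¹) ^ 2) := Real.sqrt_lt_sqrt hD1.le hDlt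
  exact div_lt_div_of_pos_left hξ hs1 hs

/-- lower bound valid for θ ∈ [0,1) -/
lemma G_lower {ξ b θ : ℝ} (hξ : 0 < ξ) (hb : 0 < b) (hθ0 : 0 ≤ θ) (hθ1 : θ < 1) :
    ξ / Real.sqrt (b * (2 + b)) ≤ G ξ b θ := by
  set f := 1 + b * (1 - θ ^ 2) with hfdef
  have hf : 1 < f := one_lt_f hb hθ0 hθ1
  have hfpos : (0:ℝ) < f := by linarith
  have hD : 1 - (f⁻¹) ^ 2 ≤ b * (2 + b) := by
    have h2 : 1 - (f⁻¹) ^ 2 = (f ^ 2 - 1) / f ^ 2 := by field_simp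
    have h3 : (f ^ 2 - 1) / f ^ 2 ≤ f ^ 2 - 1 :=
      div_le_self (by nlinarith) (by nlinarith)
    have h4 : f ^ 2 - 1 ≤ b * (2 + b) := by
      have ha : f - 1 ≤ b := by simp only [hfdef]; nlinarith [sq_nonneg θ]
      have hc : f + 1 ≤ 2 + b := by linarith
      nlinarith
    rw [h2]; exact h3.trans h4
  have hDpos := D_pos hb hθ0 hθ1
  have hs : Real.sqrt (1 - (f⁻¹) ^ 2) ≤ Real.sqrt (b * (2 + b)) := Real.sqrt_le_sqrt hD
  have hspos : 0 < Real.sqrt (1 - (f⁻¹) ^ 2) := Real.sqrt_pos.2 hDpos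
  exact div_le_div_of_nonneg_left hξ.le hspos hs

/-- upper bound valid for θ ∈ [0,1] -/
lemma G_upper {ξ b θ : ℝ} (hξ : 0 < ξ) (hb : 0 < b) (hθ0 : 0 ≤ θ) (hθ1 : θ ≤ 1) :
    G ξ b θ ≤ ξ * (1 + b) / Real.sqrt (2 * b) * (1 - θ) ^ (-(1/2) : ℝ) := by
  rcases eq_or_lt_of_le hθ1 with h1 | h1
  · subst h1
    norm_num [G]
  · set f := 1 + b * (1 - θ ^ 2) with hfdef
    have hf : 1 < f := one_lt_f hb hθ0 h1
    have hfpos : (0:ℝ) < f := by linarith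
    have hfle : f ≤ 1 + b := by simp only [hfdef]; nlinarith [sq_nonneg θ]
    have hkey : 2 * b * (1 - θ) / (1 + b) ^ 2 ≤ 1 - (f⁻¹) ^ 2 := by
      have h2 : 1 - (f⁻¹) ^ 2 = (f ^ 2 - 1) / f ^ 2 := by field_simp
      rw [h2]
      have hnum : 2 * b * (1 - θ) ≤ f ^ 2 - 1 := by
        have hA : b * ((1 - θ) * (1 + θ)) ≤ f - 1 := by simp only [hfdef]; nlinarith
        have h5 : 2 * (f - 1) ≤ f ^ 2 - 1 := by nlinarith [sq_nonneg (f - 1)]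
        have h6 : b * (1 - θ) ≤ b * ((1 - θ) * (1 + θ)) := by
          nlinarith [mul_nonneg (mul_nonneg hb.le (show (0:ℝ) ≤ 1 - θ by linarith)) hθ0]
        linarith
      exact div_le_div₀ (by nlinarith) hnum (pow_pos hfpos 2) (by nlinarith)
    have hsq : Real.sqrt (2 * b * (1 - θ) / (1 + b) ^ 2)
        = Real.sqrt (2 * b * (1 - θ)) / (1 + b) := by
      rw [Real.sqrt_div (by nlinarith), Real.sqrt_sq (by linarith)]
    have hsD : Real.sqrt (2 * b * (1 - θ)) / (1 + b) ≤ Real.sqrt (1 - (f⁻¹) ^ 2) := by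
      rw [← hsq]; exact Real.sqrt_le_sqrt hkey
    have hKpos : 0 < Real.sqrt (2 * b * (1 - θ)) / (1 + b) :=
      div_pos (Real.sqrt_pos.2 (by nlinarith)) (by linarith)
    have hmain : G ξ b θ ≤ ξ / (Real.sqrt (2 * b * (1 - θ)) / (1 + b)) :=
      div_le_div_of_nonneg_left hξ.le hKpos hsD
    have hre : ξ / (Real.sqrt (2 * b * (1 - θ)) / (1 + b))
        = ξ * (1 + b) / Real.sqrt (2 * b) * (1 - θ) ^ (-(1/2) : ℝ) := by
      rw [Real.rpow_neg (by linarith), ← Real.sqrt_eq_rpow,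
        show 2 * b * (1 - θ) = (2 * b) * (1 - θ) from rfl,
        Real.sqrt_mul (by positivity)]
      have h2b : Real.sqrt (2 * b) ≠ 0 := ne_of_gt (Real.sqrt_pos.2 (by positivity))
      have h1θ : Real.sqrt (1 - θ) ≠ 0 := ne_of_gt (Real.sqrt_pos.2 (by linarith))
      field_simp
    rw [← hre]; exact hmain


lemma G_measurable (ξ b : ℝ) : Measurable (G ξ b) := by
  apply Measurable.div measurable_const
  apply Measurable.sqrt
  apply Measurable.sub measurable_const
  apply Measurable.pow_const
  apply Measurable.inv
  apply Measurable.add measurable_const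
  apply Measurable.const_mul
  exact Measurable.sub measurable_const ((measurable_id.pow_const 2))

lemma bound_integrable (K b : ℝ) :
    IntervalIntegrable (fun θ => K * (1 - θ) ^ (-(1/2) : ℝ)) volume 0 1 := by
  apply IntervalIntegrable.const_mul
  have h := (intervalIntegrable_rpow' (r := -(1/2))
    (by norm_num : (-1:ℝ) < -(1/2)) (a := 0) (b := 1)).comp_sub_left 1
  simpa using h.symm

lemma G_integrable {ξ b : ℝ} (hξ : 0 < ξ) (hb : 0 < b) :
    IntervalIntegrable (G ξ b) volume 0 1 := by
  apply (bound_integrable (ξ * (1 + b) / Real.sqrt (2 * b)) b).mono_fun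
    ((G_measurable ξ b).aestronglyMeasurable)
  rw [uIoc_of_le (by norm_num : (0:ℝ) ≤ 1)]
  refine (ae_restrict_iff' measurableSet_Ioc).2 (Filter.Eventually.of_forall ?_)
  intro θ hθ
  dsimp only
  rw [Real.norm_eq_abs, Real.norm_eq_abs, abs_of_nonneg (G_nonneg hξ),
    abs_of_nonneg (mul_nonneg (by positivity) (Real.rpow_nonneg (by linarith [hθ.2]) _))]
  exact G_upper hξ hb hθ.1.le hθ.2

lemma integral_strict {ξ b₁ b₂ : ℝ} (hξ : 0 < ξ) (hb₁ : 0 < b₁) (hb : b₁ < b₂) :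
    ∫ θ in (0:ℝ)..1, G ξ b₂ θ < ∫ θ in (0:ℝ)..1, G ξ b₁ θ := by
  have h1 := G_integrable hξ hb₁
  have h2 := G_integrable hξ (hb₁.trans hb)
  have hpos : 0 < ∫ θ in (0:ℝ)..1, (G ξ b₁ θ - G ξ b₂ θ) :=
    intervalIntegral_pos_of_pos_on (h1.sub h2)
      (fun x hx => sub_pos.2 (G_strict_mono hξ hb₁ hb hx.1.le hx.2)) one_pos
  rw [intervalIntegral.integral_sub h1 h2] at hpos
  linarith

lemma integral_lower {ξ b : ℝ} (hξ : 0 < ξ) (hb : 0 < b) :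
    ξ / Real.sqrt (b * (2 + b)) ≤ ∫ θ in (0:ℝ)..1, G ξ b θ := by
  have hconst : ∫ _ in (0:ℝ)..1, (ξ / Real.sqrt (b * (2 + b))) = ξ / Real.sqrt (b * (2 + b)) := by
    simp
  rw [← hconst]
  apply intervalIntegral.integral_mono_ae_restrict (by norm_num)
    intervalIntegrable_const (G_integrable hξ hb)
  have hne : ∀ᵐ θ : ℝ, θ ≠ 1 := by
    exact (compl_mem_ae_iff.2 (Real.volume_singleton (a := 1)))
  filter_upwards [ae_restrict_mem measurableSet_Icc, ae_restrict_of_ae hne] with θ hθ hθne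
  exact G_lower hξ hb hθ.1 (lt_of_le_of_ne hθ.2 hθne)

end S18

theorem stmt18 (κ ξ : ℝ) (hκ : κ < 0) (hξ : 0 < ξ) :
    (∀ lam₁ lam₂ : ℝ, 0 < lam₁ → lam₁ < lam₂ → Jmap κ lam₂ ξ < Jmap κ lam₁ ξ) ∧
    Filter.Tendsto (fun lam => Jmap κ lam ξ) (nhdsWithin 0 (Set.Ioi 0)) Filter.atTop := by
  have hκ' : 0 < -κ := neg_pos.2 hκ
  set b : ℝ → ℝ := fun lam => lam * (-κ) / 2 * ξ ^ 2 with hbdef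
  have hJ : ∀ lam, Jmap κ lam ξ = Real.sqrt (-κ) * ∫ θ in (0:ℝ)..1, S18.G ξ (b lam) θ := by
    intro lam
    unfold Jmap
    congr 1
    apply intervalIntegral.integral_congr
    intro θ _
    simp only [S18.G]
    have e : 1 - lam * κ / 2 * ξ ^ 2 * (1 - θ ^ 2)
        = 1 + b lam * (1 - θ ^ 2) := by simp only [hbdef]; ring
    rw [e]
  have hbpos : ∀ lam, 0 < lam → 0 < b lam := by
    intro lam hlam
    have := mul_pos hlam hκ'
    simp only [hbdef]
    positivity
  constructor
  · intro lam₁ lam₂ h1 h12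
    rw [hJ, hJ]
    have hb1 := hbpos lam₁ h1
    have hbb : b lam₁ < b lam₂ := by
      simp only [hbdef]
      have h2 : 0 < ξ ^ 2 := pow_pos hξ 2
      have := mul_pos hκ' h2
      nlinarith
    exact mul_lt_mul_of_pos_left (S18.integral_strict hξ hb1 hbb) (Real.sqrt_pos.2 hκ')
  · have hL : Filter.Tendsto (fun lam => Real.sqrt (-κ) * ξ *
        (Real.sqrt (b lam * (2 + b lam)))⁻¹) (nhdsWithin 0 (Set.Ioi 0)) Filter.atTop := by
      apply Filter.Tendsto.const_mul_atTop (mul_pos (Real.sqrt_pos.2 hκ') hξ)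
      apply Filter.Tendsto.comp tendsto_inv_nhdsGT_zero
      apply tendsto_nhdsWithin_of_tendsto_nhds_of_eventually_within
      · have hc : Continuous fun lam : ℝ => Real.sqrt (b lam * (2 + b lam)) := by
          apply Real.continuous_sqrt.comp
          simp only [hbdef]
          continuity
        have h0 : Real.sqrt (b 0 * (2 + b 0)) = 0 := by
          simp [hbdef]
        have := hc.tendsto 0
        rw [h0] at this
        exact this.mono_left nhdsWithin_le_nhds
      · filter_upwards [self_mem_nhdsWithin] with lam hlam
        have hb := hbpos lam hlam
        exact Real.sqrt_pos.2 (mul_pos hb (by linarith))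
    apply tendsto_atTop_mono' _ ?_ hL
    filter_upwards [self_mem_nhdsWithin] with lam hlam
    have hb := hbpos lam hlam
    rw [hJ]
    have h1 : Real.sqrt (-κ) * ξ * (Real.sqrt (b lam * (2 + b lam)))⁻¹
        = Real.sqrt (-κ) * (ξ / Real.sqrt (b lam * (2 + b lam))) := by ring
    rw [h1]
    exact mul_le_mul_of_nonneg_left (S18.integral_lower hξ hb) (Real.sqrt_nonneg _)
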